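/- If G is a tree with n vertices, then the optimal rubbling number satisfies ρ_opt(G) ≤ ⌈(n + 1)/2⌉. -/

import Mathlib

open Finset

variable {V : Type*}

/-- A pebbling move: remove two pebbles at a vertex `v` and add one pebble at an
adjacent vertex `u`. -/
def IsPebblingMove (G : SimpleGraph V) (p p' : V → ℕ) : Prop :=
  ∃ v u, G.Adj v u ∧ 2 ≤ p v ∧
    p' v = p v - 2 ∧ p' u = p u + 1 ∧ ∀ z, z ≠ v → z ≠ u → p' z = p z

/-- A strict rubbling move: remove one pebble each at distinct vertices `v` and `w`,
both adjacent to `u`, and add one pebble at `u`. -/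
def IsStrictRubblingMove (G : SimpleGraph V) (p p' : V → ℕ) : Prop :=
  ∃ v w u, v ≠ w ∧ G.Adj v u ∧ G.Adj w u ∧ 1 ≤ p v ∧ 1 ≤ p w ∧
    p' v = p v - 1 ∧ p' w = p w - 1 ∧ p' u = p u + 1 ∧
    ∀ z, z ≠ v → z ≠ w → z ≠ u → p' z = p z

/-- A rubbling move is a pebbling move or a strict rubbling move. -/
def IsRubblingMove (G : SimpleGraph V) (p p' : V → ℕ) : Prop :=
  IsPebblingMove G p p' ∨ IsStrictRubblingMove G p p'

/-- A vertex `x` is reachable from the pebble distribution `p` if some executable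
sequence of rubbling moves leads to a distribution with a pebble on `x`. -/
def RubblingReachable (G : SimpleGraph V) (p : V → ℕ) (x : V) : Prop :=
  ∃ q : V → ℕ, Relation.ReflTransGen (IsRubblingMove G) p q ∧ 1 ≤ q x

/-- The rubbling number: the least `m` such that every vertex is reachable from
every pebble distribution of size `m`. -/
noncomputable def rubblingNumber (G : SimpleGraph V) [Fintype V] : ℕ :=
  sInf {m | ∀ p : V → ℕ, ∑ v, p v = m → ∀ x, RubblingReachable G p x}

/-- The optimal rubbling number: the least size of a pebble distribution from which
every vertex is reachable. -/
noncomputable def optimalRubblingNumber (G : SimpleGraph V) [Fintype V] : ℕ :=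
  sInf {m | ∃ p : V → ℕ, ∑ v, p v = m ∧ ∀ x, RubblingReachable G p x}


section AuxRubbling

open SimpleGraph Walk

variable {V : Type*}


lemma move_add {G : SimpleGraph V} {p q : V → ℕ} (c : V → ℕ)
    (h : IsRubblingMove G p q) : IsRubblingMove G (p + c) (q + c) := by
  rcases h with ⟨v, u, hadj, hv, hqv, hqu, hrest⟩ |
    ⟨v, w, u, hvw, ha1, ha2, hv, hw, hqv, hqw, hqu, hrest⟩
  · refine Or.inl ⟨v, u, hadj, ?_, ?_, ?_, fun z hz1 hz2 => ?_⟩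
    · simp only [Pi.add_apply]; omega
    · simp only [Pi.add_apply, hqv]; omega
    · simp only [Pi.add_apply, hqu]; omega
    · simp only [Pi.add_apply, hrest z hz1 hz2]
  · refine Or.inr ⟨v, w, u, hvw, ha1, ha2, ?_, ?_, ?_, ?_, ?_, fun z h1 h2 h3 => ?_⟩
    · simp only [Pi.add_apply]; omega
    · simp only [Pi.add_apply]; omega
    · simp only [Pi.add_apply, hqv]; omega
    · simp only [Pi.add_apply, hqw]; omega
    · simp only [Pi.add_apply, hqu]; omega
    · simp only [Pi.add_apply, hrest z h1 h2 h3]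

lemma rtg_add {G : SimpleGraph V} {p q : V → ℕ} (c : V → ℕ)
    (h : Relation.ReflTransGen (IsRubblingMove G) p q) :
    Relation.ReflTransGen (IsRubblingMove G) (p + c) (q + c) :=
  Relation.ReflTransGen.lift (fun x => x + c) (fun _ _ hab => move_add c hab) _ _ h

lemma reachable_add {G : SimpleGraph V} {p : V → ℕ} {x : V} (c : V → ℕ)
    (h : RubblingReachable G p x) : RubblingReachable G (p + c) x := by
  obtain ⟨q, hst, hx⟩ := h
  exact ⟨q + c, rtg_add c hst, by simp only [Pi.add_apply]; omega⟩

lemma reach_pebble [DecidableEq V] {G : SimpleGraph V} {p : V → ℕ} {w u : V}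
    (h : G.Adj w u) (hw : RubblingReachable G p w) :
    RubblingReachable G (p + fun z => if z = w then 1 else 0) u := by
  obtain ⟨q, hst, hq⟩ := hw
  set δ : V → ℕ := fun z => if z = w then 1 else 0 with hδ
  have hne : u ≠ w := h.ne'
  refine ⟨fun z => if z = u then (q + δ) u + 1 else if z = w then (q + δ) w - 2 else (q + δ) z,
    (rtg_add δ hst).tail (Or.inl ⟨w, u, h, ?_, ?_, ?_, fun z hz1 hz2 => ?_⟩), ?_⟩
  · simp [hδ]; omega
  · simp [Ne.symm hne]
  · simp
  · simp [hz1, hz2]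
  · simp

lemma reach_strict [DecidableEq V] {G : SimpleGraph V} {p : V → ℕ} {x u w : V}
    (hux : u ≠ x) (h1 : G.Adj u w) (h2 : G.Adj x w) (hx : RubblingReachable G p x) :
    RubblingReachable G (p + fun z => if z = u then 1 else 0) w := by
  obtain ⟨q, hst, hq⟩ := hx
  set δ : V → ℕ := fun z => if z = u then 1 else 0 with hδ
  have huw : u ≠ w := h1.ne
  have hxw : x ≠ w := h2.ne
  refine ⟨fun z => if z = w then (q + δ) w + 1 else if z = u then (q + δ) u - 1
      else if z = x then (q + δ) x - 1 else (q + δ) z,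
    (rtg_add δ hst).tail (Or.inr ⟨u, x, w, hux, h1, h2, ?_, ?_, ?_, ?_, ?_,
      fun z hz1 hz2 hz3 => ?_⟩), ?_⟩
  · simp [hδ]
  · simp [hδ, Ne.symm hux]; omega
  · simp [huw]
  · simp [hxw, Ne.symm hux]
  · simp
  · simp [hz1, hz2, hz3]
  · simp

open SimpleGraph Walk

def ConnOn (G : SimpleGraph V) (S : Finset V) : Prop :=
  ∀ a ∈ S, ∀ b ∈ S, ∃ w : G.Walk a b, w.IsPath ∧ ∀ v ∈ w.support, v ∈ S

lemma support_split {G : SimpleGraph V} [DecidableEq V] {a b u : V} (p : G.Walk a b)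
    (h : u ∈ p.support) :
    p.support = (p.takeUntil u h).support ++ (p.dropUntil u h).support.tail := by
  conv_lhs => rw [← Walk.take_spec p h]
  rw [Walk.support_append]

/-- In a graph with unique paths, if `y` is on the path `cons h1 r` starting at `a` and
`y` is adjacent to `a`, then `y` is the second vertex. -/
lemma eq_snd_of_adj {G : SimpleGraph V} [DecidableEq V]
    (hU : ∀ ⦃x y : V⦄ (p q : G.Path x y), p = q)
    {a b y e : V} (h1 : G.Adj a e) {r : G.Walk e b} (hp : (Walk.cons h1 r).IsPath)
    (hmem : y ∈ (Walk.cons h1 r).support) (hadj : G.Adj a y) : y = e := by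
  have ht : ((Walk.cons h1 r).takeUntil y hmem).IsPath := hp.takeUntil hmem
  have heq : (Walk.cons h1 r).takeUntil y hmem = Walk.cons hadj Walk.nil := by
    have := hU ⟨(Walk.cons h1 r).takeUntil y hmem, ht⟩ (Path.singleton hadj)
    simpa [Path.singleton] using congrArg Subtype.val this
  have hs := support_split (Walk.cons h1 r) hmem
  rw [heq] at hs
  rw [Walk.support_cons, Walk.support_eq_cons r] at hs
  simp only [Walk.support_cons, Walk.support_nil, List.cons_append, List.nil_append] at hs
  have := List.head_eq_of_cons_eq (List.tail_eq_of_cons_eq hs)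
  exact this.symm

/-- Removing a vertex with at most one neighbour inside `S` keeps `S` path-connected. -/
lemma conn_erase {G : SimpleGraph V} [DecidableEq V] {S : Finset V} (hS : ConnOn G S)
    {u w0 : V} (hleaf : ∀ y ∈ S, G.Adj u y → y = w0) : ConnOn G (S.erase u) := by
  intro a ha b hb
  obtain ⟨ha', haS⟩ := Finset.mem_erase.mp ha
  obtain ⟨hb', hbS⟩ := Finset.mem_erase.mp hb
  obtain ⟨p, hp, hpS⟩ := hS a haS b hbS
  by_cases hu : u ∈ p.support
  · exfalso
    have hau : a ≠ u := ha'
    have hbu : u ≠ b := Ne.symm hb'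
    set t := p.takeUntil u hu with htdef
    set d := p.dropUntil u hu with hddef
    -- last edge of t
    obtain ⟨y, hy, r, hr⟩ := Walk.exists_eq_cons_of_ne (Ne.symm hau) t.reverse
    have hyS : y ∈ S := by
      have : y ∈ t.support := by
        have : y ∈ t.reverse.support := by rw [hr]; simp [Walk.start_mem_support]
        rwa [Walk.support_reverse, List.mem_reverse] at this
      exact hpS _ (Walk.support_takeUntil_subset p hu this)
    have hyw : y = w0 := hleaf y hyS hy
    have hwt : w0 ∈ t.support := by
      rw [← hyw]
      have : y ∈ t.reverse.support := by rw [hr]; simp [Walk.start_mem_support]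
      rwa [Walk.support_reverse, List.mem_reverse] at this
    -- first edge of d
    obtain ⟨z, hz, r', hr'⟩ := Walk.exists_eq_cons_of_ne hbu d
    have hzS : z ∈ S := by
      have : z ∈ d.support := by rw [hr']; simp [Walk.start_mem_support]
      exact hpS _ (Walk.support_dropUntil_subset p hu this)
    have hzw : z = w0 := hleaf z hzS hz
    have hwd : w0 ∈ d.support.tail := by
      rw [hr', Walk.support_cons]
      simpa using hzw ▸ (Walk.start_mem_support r')
    have hnd := hp.support_nodup
    rw [support_split p hu, List.nodup_append] at hnd
    exact hnd.2.2 _ hwt _ hwd rfl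
  · exact ⟨p, hp, fun v hv => Finset.mem_erase.mpr ⟨fun h => hu (h ▸ hv), hpS v hv⟩⟩

lemma key [DecidableEq V] [Fintype V] (G : SimpleGraph V)
    (hU : ∀ ⦃x y : V⦄ (p q : G.Path x y), p = q) :
    ∀ (n : ℕ) (S : Finset V), S.card ≤ n → S.Nonempty → ConnOn G S →
    ∃ p : V → ℕ, (∑ v, p v) ≤ (S.card + 2) / 2 ∧ ∀ x ∈ S, RubblingReachable G p x := by
  intro n
  induction n with
  | zero =>
    intro S hc hne _
    exact absurd (Finset.card_pos.mpr hne) (by omega)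
  | succ n IH =>
    intro S hcard hne hconnS
    by_cases hsmall : S.card ≤ 2
    · refine ⟨fun v => if v ∈ S then 1 else 0, ?_,
        fun x hx => ⟨_, Relation.ReflTransGen.refl, by simp [hx]⟩⟩
      calc (∑ v, if v ∈ S then (1:ℕ) else 0) = S.card := by simp [Finset.sum_ite_mem]
        _ ≤ (S.card + 2) / 2 := by omega
    · push_neg at hsmall
      set Len : Set ℕ :=
        {k | ∃ (c d : V) (w : G.Walk c d), w.IsPath ∧ (∀ v ∈ w.support, v ∈ S) ∧ w.length = k}
        with hLen
      have hbdd : BddAbove Len := by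
        refine ⟨S.card, fun k hk => ?_⟩
        obtain ⟨c, d, w, hw, hwS, rfl⟩ := hk
        have h1 : w.support.toFinset.card = w.support.length :=
          List.toFinset_card_of_nodup hw.support_nodup
        have h2 : w.support.toFinset ⊆ S := fun v hv => hwS v (List.mem_toFinset.mp hv)
        have h3 := Finset.card_le_card h2
        have h4 := w.length_support
        omega
      obtain ⟨a0, ha0⟩ := hne
      have hne0 : Len.Nonempty := by
        refine ⟨0, a0, a0, Walk.nil, Walk.IsPath.nil, ?_, rfl⟩
        intro v hv
        simp at hv
        exact hv ▸ ha0
      have hmax : ∀ k ∈ Len, k ≤ sSup Len := fun k hk => le_csSup hbdd hk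
      obtain ⟨a, b, q, hq, hqS, hqlen⟩ :
          ∃ (c d : V) (w : G.Walk c d), w.IsPath ∧ (∀ v ∈ w.support, v ∈ S) ∧
            w.length = sSup Len := Nat.sSup_mem hne0 hbdd
      have hK2 : 2 ≤ sSup Len := by
        by_contra hK
        push_neg at hK
        have hadj : ∀ c ∈ S, ∀ d ∈ S, c ≠ d → G.Adj c d := by
          intro c hc d hd hcd
          obtain ⟨w, hw, hwS⟩ := hconnS c hc d hd
          have hle := hmax w.length ⟨c, d, w, hw, hwS, rfl⟩
          have hne0' : w.length ≠ 0 := fun h => hcd (w.eq_of_length_eq_zero h)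
          exact w.adj_of_length_eq_one (by omega)
        have h2 : 2 ≤ (S.erase a0).card := by
          rw [Finset.card_erase_of_mem ha0]; omega
        obtain ⟨y, hy⟩ := Finset.card_pos.mp (by omega : 0 < (S.erase a0).card)
        have h1 : 0 < ((S.erase a0).erase y).card := by
          rw [Finset.card_erase_of_mem hy]; omega
        obtain ⟨z, hz⟩ := Finset.card_pos.mp h1
        obtain ⟨hzy, hz'⟩ := Finset.mem_erase.mp hz
        obtain ⟨hzx, hzS⟩ := Finset.mem_erase.mp hz'
        obtain ⟨hyx, hyS⟩ := Finset.mem_erase.mp hy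
        have hxy := hadj a0 ha0 y hyS (Ne.symm hyx)
        have hyz := hadj y hyS z hzS (Ne.symm hzy)
        have hxz := hadj a0 ha0 z hzS (Ne.symm hzx)
        have hP2 : (Walk.cons hxy (Walk.cons hyz Walk.nil)).IsPath := by
          simp [Walk.isPath_def]
          exact ⟨⟨Ne.symm hyx, Ne.symm hzx⟩, Ne.symm hzy⟩
        have heq := hU (SimpleGraph.Path.singleton hxz) ⟨_, hP2⟩
        have hlen := congrArg (fun P => P.1.length) heq
        simp [SimpleGraph.Path.singleton] at hlen
      -- destructure the maximal path
      cases q with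
      | nil => simp at hqlen; omega
      | cons h₁ q₁ =>
        rename_i w1
        cases q₁ with
        | nil => simp at hqlen; omega
        | cons h₂ q₂ =>
          rename_i x1
          have hq1 : (Walk.cons h₂ q₂).IsPath := ((Walk.cons_isPath_iff _ _).mp hq).1
          have hamem : a ∉ (Walk.cons h₂ q₂).support := ((Walk.cons_isPath_iff _ _).mp hq).2
          have hq2 : q₂.IsPath := ((Walk.cons_isPath_iff _ _).mp hq1).1
          have hwmem : w1 ∉ q₂.support := ((Walk.cons_isPath_iff _ _).mp hq1).2
          have hS2 : ∀ v ∈ (Walk.cons h₂ q₂).support, v ∈ S := fun v hv =>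
            hqS v (by rw [Walk.support_cons]; exact List.mem_cons_of_mem _ hv)
          have haS : a ∈ S := hqS a (Walk.start_mem_support _)
          have hwS : w1 ∈ S := hS2 w1 (Walk.start_mem_support _)
          have hxS : x1 ∈ S := hS2 x1 (by simp)
          have haw : a ≠ w1 := h₁.ne
          have hwx : w1 ≠ x1 := h₂.ne
          have hax : a ≠ x1 := by
            intro h
            apply hamem
            rw [h]
            simp
          have hleaf_u : ∀ y ∈ S, G.Adj a y → y = w1 := by
            intro y hyS hay
            by_cases hmem : y ∈ (Walk.cons h₁ (Walk.cons h₂ q₂)).support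
            · exact eq_snd_of_adj hU h₁ hq hmem hay
            · exfalso
              have hW : (Walk.cons hay.symm (Walk.cons h₁ (Walk.cons h₂ q₂))).IsPath :=
                (Walk.cons_isPath_iff _ _).mpr ⟨hq, hmem⟩
              have hWS : ∀ v ∈ (Walk.cons hay.symm
                  (Walk.cons h₁ (Walk.cons h₂ q₂))).support, v ∈ S := by
                intro v hv
                rw [Walk.support_cons] at hv
                rcases List.mem_cons.mp hv with rfl | hv
                · exact hyS
                · exact hqS v hv
              have hle := hmax _ ⟨y, b, _, hW, hWS, rfl⟩
              simp only [Walk.length_cons] at hle hqlen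
              omega
          by_cases hcase : ∃ y ∈ S, G.Adj w1 y ∧ y ≠ a ∧ y ≠ x1
          · -- Case A : w1 has another neighbour y besides a and x1; y must be a leaf
            obtain ⟨y, hyS, hwy, hya, hyx⟩ := hcase
            have hynotin : y ∉ (Walk.cons h₂ q₂).support := fun hmem =>
              hyx (eq_snd_of_adj hU h₂ hq1 hmem hwy)
            have hleaf_y : ∀ z ∈ S, G.Adj y z → z = w1 := by
              intro z hzS hyz
              by_contra hzw
              by_cases hzmem : z ∈ (Walk.cons h₂ q₂).support
              · have htU : ((Walk.cons h₂ q₂).takeUntil z hzmem).IsPath := hq1.takeUntil hzmem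
                have hWp : (Walk.cons hwy.symm ((Walk.cons h₂ q₂).takeUntil z hzmem)).IsPath :=
                  (Walk.cons_isPath_iff _ _).mpr
                    ⟨htU, fun hc => hynotin (Walk.support_takeUntil_subset _ hzmem hc)⟩
                have heq := hU ⟨_, hWp⟩ (SimpleGraph.Path.singleton hyz)
                have hsup := congrArg (fun P => P.1.support) heq
                simp only [SimpleGraph.Path.singleton, Walk.support_cons, Walk.support_nil] at hsup
                rw [Walk.support_eq_cons ((Walk.cons h₂ q₂).takeUntil z hzmem)] at hsup
                have := List.head_eq_of_cons_eq (List.tail_eq_of_cons_eq hsup)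
                exact hzw this.symm
              · have hW : (Walk.cons hyz.symm (Walk.cons hwy.symm (Walk.cons h₂ q₂))).IsPath := by
                  refine (Walk.cons_isPath_iff _ _).mpr ⟨(Walk.cons_isPath_iff _ _).mpr
                    ⟨hq1, hynotin⟩, ?_⟩
                  rw [Walk.support_cons]
                  intro hc
                  rcases List.mem_cons.mp hc with rfl | hc
                  · exact hyz.ne rfl
                  · exact hzmem hc
                have hWS : ∀ v ∈ (Walk.cons hyz.symm (Walk.cons hwy.symm
                    (Walk.cons h₂ q₂))).support, v ∈ S := by
                  intro v hv
                  rw [Walk.support_cons] at hv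
                  rcases List.mem_cons.mp hv with rfl | hv
                  · exact hzS
                  rw [Walk.support_cons] at hv
                  rcases List.mem_cons.mp hv with rfl | hv
                  · exact hyS
                  · exact hS2 v hv
                have hle := hmax _ ⟨z, b, _, hW, hWS, rfl⟩
                simp only [Walk.length_cons] at hle hqlen
                omega
            have hyS' : y ∈ S.erase a := Finset.mem_erase.mpr ⟨hya, hyS⟩
            have hconn1 : ConnOn G (S.erase a) := conn_erase hconnS hleaf_u
            have hconn2 : ConnOn G ((S.erase a).erase y) :=
              conn_erase hconn1 (fun z hz hyz => hleaf_y z (Finset.mem_erase.mp hz).2 hyz)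
            have hwKeep : w1 ∈ (S.erase a).erase y :=
              Finset.mem_erase.mpr ⟨hwy.ne, Finset.mem_erase.mpr ⟨Ne.symm haw, hwS⟩⟩
            have hcard' : ((S.erase a).erase y).card = S.card - 2 := by
              rw [Finset.card_erase_of_mem hyS', Finset.card_erase_of_mem haS]
              omega
            obtain ⟨p', hp'sum, hp'reach⟩ := IH ((S.erase a).erase y)
              (by omega) ⟨w1, hwKeep⟩ hconn2
            refine ⟨p' + (fun z => if z = w1 then 1 else 0), ?_, ?_⟩
            · simp only [Pi.add_apply]
              rw [Finset.sum_add_distrib]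
              have hone : (∑ v : V, if v = w1 then 1 else 0) = 1 := by simp
              rw [hone]
              omega
            · intro x hx
              by_cases hxa : x = a
              · subst hxa
                exact reach_pebble h₁.symm (hp'reach w1 hwKeep)
              by_cases hxy : x = y
              · subst hxy
                exact reach_pebble hwy (hp'reach w1 hwKeep)
              · exact reachable_add _ (hp'reach x
                  (Finset.mem_erase.mpr ⟨hxy, Finset.mem_erase.mpr ⟨hxa, hx⟩⟩))
          · -- Case B : remove the leaf a and its neighbour w1
            push_neg at hcase
            have hconn1 : ConnOn G (S.erase a) := conn_erase hconnS hleaf_u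
            have hleaf_w : ∀ z ∈ S.erase a, G.Adj w1 z → z = x1 := by
              intro z hz hwz
              obtain ⟨hza, hzS⟩ := Finset.mem_erase.mp hz
              exact hcase z hzS hwz hza
            have hconn2 : ConnOn G ((S.erase a).erase w1) := conn_erase hconn1 hleaf_w
            have hwS' : w1 ∈ S.erase a := Finset.mem_erase.mpr ⟨Ne.symm haw, hwS⟩
            have hxKeep : x1 ∈ (S.erase a).erase w1 :=
              Finset.mem_erase.mpr ⟨Ne.symm hwx, Finset.mem_erase.mpr ⟨Ne.symm hax, hxS⟩⟩
            have hcard' : ((S.erase a).erase w1).card = S.card - 2 := by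
              rw [Finset.card_erase_of_mem hwS', Finset.card_erase_of_mem haS]
              omega
            obtain ⟨p', hp'sum, hp'reach⟩ := IH ((S.erase a).erase w1)
              (by omega) ⟨x1, hxKeep⟩ hconn2
            refine ⟨p' + (fun z => if z = a then 1 else 0), ?_, ?_⟩
            · simp only [Pi.add_apply]
              rw [Finset.sum_add_distrib]
              have hone : (∑ v : V, if v = a then 1 else 0) = 1 := by simp
              rw [hone]
              omega
            · intro x hx
              by_cases hxa : x = a
              · subst hxa
                exact ⟨_, Relation.ReflTransGen.refl, by simp⟩
              by_cases hxw : x = w1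
              · subst hxw
                exact reach_strict hax h₁ h₂.symm (hp'reach x1 hxKeep)
              · exact reachable_add _ (hp'reach x
                  (Finset.mem_erase.mpr ⟨hxw, Finset.mem_erase.mpr ⟨hxa, hx⟩⟩))

end AuxRubbling

/-- If `G` is a tree with `n` vertices, then `ρ_opt(G) ≤ ⌈(n + 1)/2⌉`. -/
theorem optimalRubblingNumber_tree_le {V : Type*} [Fintype V] (G : SimpleGraph V)
    (hconn : G.Connected) (hacyclic : G.IsAcyclic) (n : ℕ) (hn : Fintype.card V = n) :
    optimalRubblingNumber G ≤ (n + 1 + 1) / 2 := by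
  classical
  have hU := (SimpleGraph.isAcyclic_iff_path_unique).mp hacyclic
  have hnonempty : Nonempty V := hconn.nonempty
  have hconnOn : ConnOn G Finset.univ := by
    intro a _ b _
    obtain ⟨w⟩ := hconn.preconnected a b
    exact ⟨w.bypass, SimpleGraph.Walk.bypass_isPath w, fun v _ => Finset.mem_univ v⟩
  obtain ⟨p, hp, hreach⟩ := key G hU (Finset.univ : Finset V).card Finset.univ le_rfl
    Finset.univ_nonempty hconnOn
  have hcards : (Finset.univ : Finset V).card = n := by simpa using hn
  rw [hcards] at hp
  obtain ⟨v0⟩ := hnonempty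
  apply Nat.sInf_le
  refine ⟨p + (fun z => if z = v0 then (n + 1 + 1) / 2 - ∑ v, p v else 0), ?_,
    fun x => reachable_add _ (hreach x (Finset.mem_univ x))⟩
  simp only [Pi.add_apply]
  rw [Finset.sum_add_distrib]
  have hone : (∑ v : V, if v = v0 then (n + 1 + 1) / 2 - ∑ v, p v else 0)
      = (n + 1 + 1) / 2 - ∑ v, p v := by simp
  rw [hone]
  omega
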